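/- Consider the Markov chain on state space ℕ = {1,2,…} with transition matrix (w(i,j)) (w(i,j) = probability of moving from state j to state i) given by: w(i,1) = a_i for all i; w(2,2) = 1 − b₁; w(i−1,i) = b_{i−1} for all i ≥ 2; w(1,i) = 1 − b_{i−1} for all i ≥ 3; and w(i,j) = 0 otherwise. Assume (B1): Σ_{i≥1} a_i = 1 and 0 < a_i, b_i < 1 for all i; and (B2): there exist C > 1 and 0 < ρ < 1 with b_i < C ρ^i for all i. Then this Markov chain has a unique stationary probability measure q = (q(i))_{i∈ℕ}, and it is given by q(i) = u(i) / Σ_{j≥1} |u(j)|, where u(i) = v(i) for i = 1,2 and u(i) = Σ_{k≥1} (∏_{ℓ=0}^{k−2} b_{i+ℓ}) a_{i+k−1} · v(1) for i ≥ 3, and (v(1),v(2)) is an eigenvector with positive entries, for the eigenvalue λ = 1, of the 2×2 matrix R with entries R₁₁ = 1 − σ, R₁₂ = b₁, R₂₁ = σ, R₂₂ = 1 − b₁, where σ := Σ_{ℓ≥0} (∏_{k=1}^{ℓ} b_{k+1}) a_{ℓ+2}. -/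

import Mathlib

open Filter Topology

private noncomputable def ff (a b : ℕ → ℝ) (i k : ℕ) : ℝ :=
  (∏ ℓ ∈ Finset.range k, b (i + ℓ)) * a (i + k)

private noncomputable def FF (a b : ℕ → ℝ) (i : ℕ) : ℝ := ∑' k, ff a b i k

/-- the Markov chain on `ℕ = {1,2,…}` with transition probabilities
`w(i,1) = a_i`, `w(2,2) = 1 − b₁`, `w(i−1,i) = b_{i−1}` for `i ≥ 2`,
`w(1,i) = 1 − b_{i−1}` for `i ≥ 3`, and `w(i,j) = 0` otherwise, where
(B1) `Σ a_i = 1`, `0 < a_i, b_i < 1`, and (B2) `b_i < C ρ^i` with `C > 1`, `0 < ρ < 1`,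
has a unique stationary probability measure `q(i) = u(i)/Σ_j |u(j)|`, where `u(1) = v(1)`,
`u(2) = v(2)`, `u(i) = Σ_{k≥1} (∏_{ℓ=0}^{k−2} b_{i+ℓ}) a_{i+k−1} v(1)` for `i ≥ 3`, and
`(v(1),v(2))` is any positive eigenvector for the eigenvalue `1` of the matrix
`[[1−σ, b₁],[σ, 1−b₁]]` with `σ = Σ_{ℓ≥0} (∏_{k=1}^{ℓ} b_{k+1}) a_{ℓ+2}`. -/
theorem stmt19 (a b : ℕ → ℝ) (w : ℕ → ℕ → ℝ)
    (ha_sum : HasSum (fun i : ℕ => a (i + 1)) 1)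
    (ha : ∀ i, 1 ≤ i → 0 < a i ∧ a i < 1)
    (hb : ∀ i, 1 ≤ i → 0 < b i ∧ b i < 1)
    (C ρ : ℝ) (hC : 1 < C) (hρ0 : 0 < ρ) (hρ1 : ρ < 1)
    (hbC : ∀ i, 1 ≤ i → b i < C * ρ ^ i)
    (hw1 : ∀ i, 1 ≤ i → w i 1 = a i)
    (hw2 : w 2 2 = 1 - b 1)
    (hw3 : ∀ i, 2 ≤ i → w (i - 1) i = b (i - 1))
    (hw4 : ∀ i, 3 ≤ i → w 1 i = 1 - b (i - 1))
    (hw0 : ∀ i j, 1 ≤ i → 1 ≤ j → j ≠ 1 → ¬(i = 2 ∧ j = 2) →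
      ¬(2 ≤ j ∧ i = j - 1) → ¬(i = 1 ∧ 3 ≤ j) → w i j = 0)
    (v1 v2 : ℝ) (hv1 : 0 < v1) (hv2 : 0 < v2)
    (heig1 : (1 - ∑' ℓ : ℕ, (∏ k ∈ Finset.range ℓ, b (k + 2)) * a (ℓ + 2)) * v1
        + b 1 * v2 = v1)
    (heig2 : (∑' ℓ : ℕ, (∏ k ∈ Finset.range ℓ, b (k + 2)) * a (ℓ + 2)) * v1
        + (1 - b 1) * v2 = v2)
    (u : ℕ → ℝ)
    (hu1 : u 1 = v1) (hu2 : u 2 = v2)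
    (hu3 : ∀ i, 3 ≤ i →
      u i = (∑' k : ℕ, (∏ ℓ ∈ Finset.range k, b (i + ℓ)) * a (i + k)) * v1) :
    Summable (fun j : ℕ => |u (j + 1)|) ∧
    (∀ i, 1 ≤ i → 0 ≤ u i / (∑' j : ℕ, |u (j + 1)|)) ∧
    HasSum (fun i : ℕ => u (i + 1) / (∑' j : ℕ, |u (j + 1)|)) 1 ∧
    (∀ i, 1 ≤ i →
      HasSum (fun j : ℕ => w i (j + 1) * (u (j + 1) / (∑' j' : ℕ, |u (j' + 1)|)))
        (u i / (∑' j : ℕ, |u (j + 1)|))) ∧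
    (∀ q' : ℕ → ℝ, (∀ i, 1 ≤ i → 0 ≤ q' i) →
      Summable (fun j : ℕ => q' (j + 1)) →
      (∑' i : ℕ, q' (i + 1)) = 1 →
      (∀ i, 1 ≤ i → (∑' j : ℕ, w i (j + 1) * q' (j + 1)) = q' i) →
      ∀ i, 1 ≤ i → q' i = u i / (∑' j : ℕ, |u (j + 1)|)) := by
  classical
  have hb1pos : 0 < b 1 := (hb 1 le_rfl).1
  have hprod_nonneg : ∀ i k, 1 ≤ i → 0 ≤ ∏ ℓ ∈ Finset.range k, b (i + ℓ) := by
    intro i k hi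
    exact Finset.prod_nonneg fun ℓ _ => le_of_lt (hb _ (by omega)).1
  have hprod_le_one : ∀ i k, 1 ≤ i → ∏ ℓ ∈ Finset.range k, b (i + ℓ) ≤ 1 :=
    fun i k hi => Finset.prod_le_one (fun ℓ _ => le_of_lt (hb _ (by omega)).1)
      (fun ℓ _ => le_of_lt (hb _ (by omega)).2)
  have hf_nonneg : ∀ i k, 1 ≤ i → 0 ≤ ff a b i k := fun i k hi =>
    mul_nonneg (hprod_nonneg i k hi) (le_of_lt (ha _ (by omega)).1)
  have hf_le : ∀ i k, 1 ≤ i → ff a b i k ≤ a (i + k) := by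
    intro i k hi
    have h0 := (ha (i + k) (by omega)).1
    calc ff a b i k ≤ 1 * a (i + k) :=
          mul_le_mul_of_nonneg_right (hprod_le_one i k hi) h0.le
      _ = a (i + k) := one_mul _
  have hsa : ∀ i, 1 ≤ i → Summable (fun k => a (i + k)) := by
    intro i hi
    have h1 := (summable_nat_add_iff (f := fun i : ℕ => a (i + 1)) (i - 1)).2
      ha_sum.summable
    exact h1.congr (fun k => by show a (k + (i - 1) + 1) = a (i + k); congr 1; omega)
  have hSf : ∀ i, 1 ≤ i → Summable (ff a b i) := fun i hi =>
    Summable.of_nonneg_of_le (fun k => hf_nonneg i k hi) (fun k => hf_le i k hi) (hsa i hi)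
  have hf0 : ∀ i, ff a b i 0 = a i := by
    intro i
    simp only [ff, Finset.range_zero, Finset.prod_empty, one_mul, add_zero]
  have hF_pos : ∀ i, 1 ≤ i → 0 < FF a b i := by
    intro i hi
    refine Summable.tsum_pos (hSf i hi) (fun k => hf_nonneg i k hi) 0 ?_
    rw [hf0]; exact (ha i hi).1
  have hf_succ : ∀ i k, ff a b i (k + 1) = b i * ff a b (i + 1) k := by
    intro i k
    have hp : (∏ ℓ ∈ Finset.range (k + 1), b (i + ℓ))
        = (∏ ℓ ∈ Finset.range k, b (i + 1 + ℓ)) * b i := by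
      rw [Finset.prod_range_succ']
      congr 1
      exact Finset.prod_congr rfl (fun ℓ _ => by congr 1; omega)
    simp only [ff]
    rw [hp, show i + (k + 1) = i + 1 + k from by omega]
    ring
  have hF_rec : ∀ i, 1 ≤ i → FF a b i = a i + b i * FF a b (i + 1) := by
    intro i hi
    have h2 : ∑' k, ff a b i (k + 1) = b i * FF a b (i + 1) := by
      simp only [hf_succ]; exact tsum_mul_left
    calc FF a b i = ff a b i 0 + ∑' k, ff a b i (k + 1) := Summable.tsum_eq_zero_add (hSf i hi)
      _ = a i + b i * FF a b (i + 1) := by rw [hf0, h2]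
  have hF_le : ∀ i, 1 ≤ i → FF a b i ≤ 1 := by
    intro i hi
    have h1 : FF a b i ≤ ∑' k, a (i + k) :=
      Summable.tsum_le_tsum (fun k => hf_le i k hi) (hSf i hi) (hsa i hi)
    have h2 : (∑' k, a (i + k)) ≤ ∑' j, a (j + 1) := by
      refine Summable.tsum_le_tsum_of_inj (fun k => k + (i - 1)) (add_left_injective (i - 1))
        (fun c _ => le_of_lt (ha (c + 1) (by omega)).1)
        (fun k => le_of_eq (by show a (i + k) = a (k + (i - 1) + 1); congr 1; omega))
        (hsa i hi) ha_sum.summable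
    rw [ha_sum.tsum_eq] at h2
    linarith
  have hsig : b 1 * v2 = FF a b 2 * v1 := by
    have hσ : (∑' ℓ : ℕ, (∏ k ∈ Finset.range ℓ, b (k + 2)) * a (ℓ + 2)) = FF a b 2 := by
      refine tsum_congr (fun ℓ => ?_)
      simp only [FF, ff]
      congr 1
      · exact Finset.prod_congr rfl (fun k _ => by rw [add_comm])
      · rw [add_comm]
    rw [hσ] at heig1
    linarith
  have hu_eq : ∀ i, 3 ≤ i → u i = FF a b i * v1 := by
    intro i hi; rw [hu3 i hi]; rfl
  have hu_rec : ∀ i, 3 ≤ i → u i = a i * v1 + b i * u (i + 1) := by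
    intro i hi
    rw [hu_eq i hi, hu_eq (i + 1) (by omega), hF_rec i (by omega)]
    ring
  have hu_pos : ∀ i, 1 ≤ i → 0 < u i := by
    intro i hi
    rcases Nat.lt_or_ge i 3 with h | h
    · interval_cases i
      · rw [hu1]; exact hv1
      · rw [hu2]; exact hv2
    · rw [hu_eq i h]; exact mul_pos (hF_pos i (by omega)) hv1
  have hsb : ∀ m, 1 ≤ m → Summable (fun j => b (j + m)) := by
    intro m hm
    refine Summable.of_nonneg_of_le (fun j => (hb (j + m) (by omega)).1.le)
      (fun j => ?_) ((summable_geometric_of_lt_one hρ0.le hρ1).mul_left (C * ρ ^ m))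
    have h1 := hbC (j + m) (by omega)
    calc b (j + m) ≤ C * ρ ^ (j + m) := h1.le
      _ = C * ρ ^ m * ρ ^ j := by rw [pow_add]; ring
  have hF_le_ab : ∀ i, 1 ≤ i → FF a b i ≤ a i + b i := by
    intro i hi
    rw [hF_rec i hi]
    have h1 : b i * FF a b (i + 1) ≤ b i * 1 :=
      mul_le_mul_of_nonneg_left (hF_le (i + 1) (by omega)) (hb i hi).1.le
    linarith
  have hsum_u : Summable (fun j => u (j + 1)) := by
    have h3 : Summable (fun j => u (j + 3)) := by
      refine Summable.of_nonneg_of_le (fun j => (hu_pos (j + 3) (by omega)).le)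
        (fun j => ?_) ((((hsa 3 (by omega)).congr
          (fun j => by rw [Nat.add_comm 3 j])).add
          (hsb 3 (by omega))).mul_right v1)
      rw [hu_eq (j + 3) (by omega)]
      exact mul_le_mul_of_nonneg_right (hF_le_ab (j + 3) (by omega)) hv1.le
    exact (summable_nat_add_iff (f := fun j => u (j + 1)) 2).1
      (h3.congr (fun n => rfl))
  have habs : ∀ j : ℕ, |u (j + 1)| = u (j + 1) :=
    fun j => abs_of_pos (hu_pos (j + 1) (by omega))
  have hsum_abs : Summable (fun j : ℕ => |u (j + 1)|) :=
    hsum_u.congr (fun j => (habs j).symm)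
  set S : ℝ := ∑' j : ℕ, |u (j + 1)| with hSdef
  have hS_eq : S = ∑' j : ℕ, u (j + 1) := tsum_congr habs
  have hS_pos : 0 < S := by
    rw [hS_eq]
    exact Summable.tsum_pos hsum_u (fun j => (hu_pos (j + 1) (by omega)).le) 0
      (hu_pos 1 (by omega))
  have hS_ne : S ≠ 0 := hS_pos.ne'
  -- unnormalized stationarity
  have hstat : ∀ i, 1 ≤ i → HasSum (fun j : ℕ => w i (j + 1) * u (j + 1)) (u i) := by
    intro i hi
    rcases Nat.lt_or_ge i 3 with hlt | hge
    · interval_cases i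
      · -- i = 1
        set d : ℕ → ℝ := fun j => if 2 ≤ j then b j * u (j + 1) else 0 with hddef
        have hd_nonneg : ∀ j, 0 ≤ d j := by
          intro j; simp only [hddef]
          split
          · exact mul_nonneg (hb j (by omega)).1.le (hu_pos (j + 1) (by omega)).le
          · exact le_rfl
        have hd_le : ∀ j, d j ≤ u (j + 1) := by
          intro j; simp only [hddef]
          split
          · calc b j * u (j + 1) ≤ 1 * u (j + 1) :=
                mul_le_mul_of_nonneg_right (hb j (by omega)).2.le
                  (hu_pos (j + 1) (by omega)).le
              _ = u (j + 1) := one_mul _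
          · exact (hu_pos (j + 1) (by omega)).le
        have hd_sum : Summable d := Summable.of_nonneg_of_le hd_nonneg hd_le hsum_u
        have hD := hd_sum.hasSum
        have hd0 : d 0 = 0 := by simp [hddef]
        have hDshift : HasSum (fun n => d (n + 1)) (∑' j, d j) := by
          refine (hasSum_nat_add_iff 1).2 ?_
          simpa [hd0] using hD
        have hE : HasSum (fun n => d (n + 1) - d n) 0 := by
          simpa using hDshift.sub hD
        have hA : HasSum (fun j : ℕ => a (j + 1) * v1) v1 := by
          simpa using ha_sum.mul_right v1
        have hkey : ∀ j : ℕ, w 1 (j + 1) * u (j + 1)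
            = a (j + 1) * v1 + (d (j + 1) - d j) := by
          intro j
          rcases Nat.lt_or_ge j 2 with hj | hj
          · interval_cases j
            · have hw11 : w 1 1 = a 1 := hw1 1 (by omega)
              have hd1 : d 1 = 0 := by simp [hddef]
              rw [show (0:ℕ) + 1 = 1 from rfl, hw11, hu1, hd1, hd0]
              ring
            · have hw12 : w 1 2 = b 1 := by
                have h := hw3 2 (by omega); simpa using h
              have hd2 : d 2 = b 2 * u 3 := by simp [hddef]
              have hd1 : d 1 = 0 := by simp [hddef]
              have h3 : b 2 * u 3 = FF a b 2 * v1 - a 2 * v1 := by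
                rw [hu_eq 3 (by omega), hF_rec 2 (by omega)]; ring
              rw [show (1:ℕ) + 1 = 2 from rfl, hw12, hu2, hd2, hd1, h3]
              linarith [hsig]
          · have hw1j : w 1 (j + 1) = 1 - b j := by
              have h := hw4 (j + 1) (by omega)
              simpa using h
            have hdj : d j = b j * u (j + 1) := by simp [hddef, hj]
            have hdj1 : d (j + 1) = b (j + 1) * u (j + 1 + 1) := by
              simp [hddef, show 2 ≤ j + 1 from by omega]
            have hrec := hu_rec (j + 1) (by omega)
            rw [hw1j, hdj, hdj1]
            linarith [hrec]
        have heq : (fun j : ℕ => w 1 (j + 1) * u (j + 1))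
            = fun j => a (j + 1) * v1 + (d (j + 1) - d j) := funext hkey
        rw [hu1, heq]
        simpa using hA.add hE
      · -- i = 2
        have hzero : ∀ j ∉ Finset.range 3, w 2 (j + 1) * u (j + 1) = 0 := by
          intro j hj
          rw [Finset.mem_range, not_lt] at hj
          have hw := hw0 2 (j + 1) (by omega) (by omega) (by omega)
            (by omega) (by omega) (by omega)
          rw [hw, zero_mul]
        have hs := hasSum_sum_of_ne_finset_zero (L := SummationFilter.unconditional ℕ) hzero
        have hval : (∑ j ∈ Finset.range 3, w 2 (j + 1) * u (j + 1)) = u 2 := by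
          rw [Finset.sum_range_succ, Finset.sum_range_succ, Finset.sum_range_one]
          have h1 : w 2 1 = a 2 := hw1 2 (by omega)
          have h2 : w 2 3 = b 2 := by have h := hw3 3 (by omega); simpa using h
          have h3 : b 2 * u 3 = FF a b 2 * v1 - a 2 * v1 := by
            rw [hu_eq 3 (by omega), hF_rec 2 (by omega)]; ring
          rw [show (0:ℕ) + 1 = 1 from rfl, show (1:ℕ) + 1 = 2 from rfl,
            show (2:ℕ) + 1 = 3 from rfl, h1, hw2, h2, hu1, hu2, h3]
          linarith [hsig]
        rw [← hval]
        exact hs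
    · -- i ≥ 3
      have hzero : ∀ j ∉ ({0, i} : Finset ℕ), w i (j + 1) * u (j + 1) = 0 := by
        intro j hj
        simp only [Finset.mem_insert, Finset.mem_singleton] at hj
        push_neg at hj
        have hw := hw0 i (j + 1) (by omega) (by omega) (by omega)
          (by omega) (by omega) (by omega)
        rw [hw, zero_mul]
      have hs := hasSum_sum_of_ne_finset_zero (L := SummationFilter.unconditional ℕ) hzero
      have hval : (∑ j ∈ ({0, i} : Finset ℕ), w i (j + 1) * u (j + 1)) = u i := by
        rw [Finset.sum_pair (show (0:ℕ) ≠ i from by omega)]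
        have h1 : w i 1 = a i := hw1 i (by omega)
        have h2 : w i (i + 1) = b i := by
          have h := hw3 (i + 1) (by omega); simpa using h
        rw [show (0:ℕ) + 1 = 1 from rfl, h1, h2, hu1]
        exact (hu_rec i hge).symm
      rw [← hval]
      exact hs
  refine ⟨hsum_abs, ?_, ?_, ?_, ?_⟩
  · intro i hi
    exact div_nonneg (hu_pos i hi).le hS_pos.le
  · have h := hsum_u.hasSum.div_const S
    have h2 : (∑' j : ℕ, u (j + 1)) / S = 1 := by
      rw [← hS_eq]; exact div_self hS_ne
    rw [h2] at h
    exact h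
  · intro i hi
    have h := (hstat i hi).div_const S
    have heq : (fun j : ℕ => w i (j + 1) * (u (j + 1) / S))
        = fun j => (w i (j + 1) * u (j + 1)) / S := by
      funext j; ring
    rw [heq]
    exact h
  · intro q' hq'nn hq'sum hq'tsum hq'stat
    have hq'rec : ∀ i, 3 ≤ i → q' i = a i * q' 1 + b i * q' (i + 1) := by
      intro i hi
      have hzero : ∀ j ∉ ({0, i} : Finset ℕ), w i (j + 1) * q' (j + 1) = 0 := by
        intro j hj
        simp only [Finset.mem_insert, Finset.mem_singleton] at hj
        push_neg at hj
        rw [hw0 i (j + 1) (by omega) (by omega) (by omega) (by omega) (by omega)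
          (by omega), zero_mul]
      have h := hq'stat i (by omega)
      rw [tsum_eq_sum hzero, Finset.sum_pair (show (0:ℕ) ≠ i from by omega)] at h
      have h1 : w i 1 = a i := hw1 i (by omega)
      have h2 : w i (i + 1) = b i := by
        have h' := hw3 (i + 1) (by omega); simpa using h'
      rw [show (0:ℕ) + 1 = 1 from rfl, h1, h2] at h
      linarith [h]
    have hkey : ∀ i, 3 ≤ i → ∀ n, q' i = (∑ k ∈ Finset.range n, ff a b i k) * q' 1
        + (∏ ℓ ∈ Finset.range n, b (i + ℓ)) * q' (i + n) := by
      intro i hi n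
      induction n with
      | zero => simp
      | succ n ih =>
        rw [ih, Finset.sum_range_succ, Finset.prod_range_succ,
          hq'rec (i + n) (by omega), show i + (n + 1) = i + n + 1 from by omega]
        simp only [ff]
        ring
    have hq'F : ∀ i, 3 ≤ i → q' i = FF a b i * q' 1 := by
      intro i hi
      have h1 : Tendsto (fun n => (∑ k ∈ Finset.range n, ff a b i k) * q' 1) atTop
          (𝓝 (FF a b i * q' 1)) :=
        ((hSf i (by omega)).hasSum.tendsto_sum_nat).mul_const _
      have h0 : Tendsto (fun n => q' (n + 1)) atTop (𝓝 0) := hq'sum.tendsto_atTop_zero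
      have h2 : Tendsto (fun n => q' (i + n)) atTop (𝓝 0) := by
        have h := h0.comp (Filter.tendsto_add_atTop_nat (i - 1))
        exact h.congr (fun n => by simp only [Function.comp_apply]; congr 1; omega)
      have h3 : Tendsto (fun n => (∏ ℓ ∈ Finset.range n, b (i + ℓ)) * q' (i + n))
          atTop (𝓝 0) := by
        refine squeeze_zero (fun n => mul_nonneg (hprod_nonneg i n (by omega))
          (hq'nn (i + n) (by omega))) (fun n => ?_) h2
        calc (∏ ℓ ∈ Finset.range n, b (i + ℓ)) * q' (i + n) ≤ 1 * q' (i + n) :=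
            mul_le_mul_of_nonneg_right (hprod_le_one i n (by omega))
              (hq'nn (i + n) (by omega))
          _ = q' (i + n) := one_mul _
      have h4 : Tendsto (fun n : ℕ => q' i) atTop (𝓝 (FF a b i * q' 1 + 0)) :=
        (h1.add h3).congr (fun n => (hkey i hi n).symm)
      have h5 := tendsto_nhds_unique h4 tendsto_const_nhds
      simpa using h5.symm
    have hq'2 : b 1 * q' 2 = FF a b 2 * q' 1 := by
      have hzero : ∀ j ∉ Finset.range 3, w 2 (j + 1) * q' (j + 1) = 0 := by
        intro j hj
        rw [Finset.mem_range, not_lt] at hj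
        rw [hw0 2 (j + 1) (by omega) (by omega) (by omega) (by omega) (by omega)
          (by omega), zero_mul]
      have h := hq'stat 2 (by omega)
      rw [tsum_eq_sum hzero, Finset.sum_range_succ, Finset.sum_range_succ,
        Finset.sum_range_one] at h
      have h1 : w 2 1 = a 2 := hw1 2 (by omega)
      have h2 : w 2 3 = b 2 := by have h' := hw3 3 (by omega); simpa using h'
      rw [show (0:ℕ) + 1 = 1 from rfl, show (1:ℕ) + 1 = 2 from rfl,
        show (2:ℕ) + 1 = 3 from rfl, h1, hw2, h2, hq'F 3 (by omega)] at h
      have h6 := hF_rec 2 (by omega)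
      linear_combination -h - q' 1 * h6
    have hall : ∀ i, 1 ≤ i → q' i * v1 = u i * q' 1 := by
      intro i hi
      rcases Nat.lt_or_ge i 3 with h | h
      · interval_cases i
        · rw [hu1]; ring
        · rw [hu2]
          have hc : b 1 * (q' 2 * v1) = b 1 * (v2 * q' 1) := by
            calc b 1 * (q' 2 * v1) = (b 1 * q' 2) * v1 := by ring
              _ = (FF a b 2 * q' 1) * v1 := by rw [hq'2]
              _ = (FF a b 2 * v1) * q' 1 := by ring
              _ = (b 1 * v2) * q' 1 := by rw [hsig]
              _ = b 1 * (v2 * q' 1) := by ring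
          exact mul_left_cancel₀ hb1pos.ne' hc
      · rw [hu_eq i h, hq'F i h]; ring
    have hS_q1 : S * q' 1 = v1 := by
      have h1 : (∑' j : ℕ, q' (j + 1) * v1) = v1 := by
        rw [tsum_mul_right, hq'tsum, one_mul]
      have h2 : (∑' j : ℕ, q' (j + 1) * v1) = S * q' 1 := by
        rw [tsum_congr (fun j => hall (j + 1) (by omega)), tsum_mul_right, ← hS_eq]
      rw [← h2, h1]
    intro i hi
    have h := hall i hi
    have hq1 : q' 1 = v1 / S := by
      rw [eq_div_iff hS_ne]; linarith [hS_q1]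
    rw [hq1] at h
    have hc : q' i * v1 = (u i / S) * v1 := by
      rw [h]; ring
    exact mul_right_cancel₀ hv1.ne' hc
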